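/- Let K ⊆ ℂ be a field, let d ≥ 5, and suppose p(x,y) = Σ_{i=1}^{3} λ_i(α_i x + β_i y)^d ∈ K[x,y] is an honest representation with λ_i, α_i, β_i ∈ ℂ, α_i ≠ 0 for i = 1,2,3, and L_K(p) > 3. Set γ_i = β_i/α_i and let u ∈ K be the discriminant of the cubic (t − γ_1)(t − γ_2)(t − γ_3), i.e. u = (γ_1−γ_2)^2(γ_1−γ_3)^2(γ_2−γ_3)^2. Then the cubic h(x,y) = (y − γ_1 x)(y − γ_2 x)(y − γ_3 x) has coefficients in K, at most one γ_i lies in K, and: (1) if no γ_i lies in K and √u ∈ K, then L_{K(γ_i)}(p) = 3 for each i ∈ {1,2,3}; (2) if no γ_i lies in K and √u ∉ K, then L_{K(γ_i, √u)}(p) = 3 for each i; (3) if exactly one γ_i lies in K, then L_{K(√u)}(p) = 3, and in the given representation one summand lies in K[x,y] while the other two are mapped to one another by the nontrivial K-automorphism of K(√u). -/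

import Mathlib

open MvPolynomial Finset

/-- The linear form `a*x + b*y` as a binary polynomial over `ℂ`. -/
noncomputable def lform (a b : ℂ) : MvPolynomial (Fin 2) ℂ := C a * X 0 + C b * X 1

/-- The `K`-rank of a binary form `p`: the least `r` such that `p` is a `K`-linear
combination of `r` d-th powers of linear forms with coefficients in `K`. -/
noncomputable def rankIn (K : Subfield ℂ) (d : ℕ) (p : MvPolynomial (Fin 2) ℂ) : ℕ :=
  sInf {r : ℕ | ∃ lam a b : Fin r → ℂ, (∀ j, lam j ∈ K ∧ a j ∈ K ∧ b j ∈ K) ∧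
    p = ∑ j, C (lam j) * lform (a j) (b j) ^ d}

/-- The Waring rank `L_ℂ` of a binary form. -/
noncomputable def rankC (d : ℕ) (p : MvPolynomial (Fin 2) ℂ) : ℕ :=
  sInf {r : ℕ | ∃ lam a b : Fin r → ℂ, p = ∑ j, C (lam j) * lform (a j) (b j) ^ d}

/-- Single partial derivative as a plain function. -/
noncomputable def pd (i : Fin 2) (p : MvPolynomial (Fin 2) ℂ) : MvPolynomial (Fin 2) ℂ :=
  pderiv i p

/-- `apolar h p = h(D) p`, the differential operator of `h` applied to `p`. -/
noncomputable def apolar (h p : MvPolynomial (Fin 2) ℂ) : MvPolynomial (Fin 2) ℂ :=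
  ∑ m ∈ h.support, h.coeff m • ((pd 0)^[m 0] ((pd 1)^[m 1] p))

/-- The subfield of `ℂ` generated by a subfield `K` and a set `S`. -/
noncomputable def adj (K : Subfield ℂ) (S : Set ℂ) : Subfield ℂ := Subfield.closure (↑K ∪ S)

/-- `z` and `w` are conjugate over `K` in `K(s)`: `z = a + b s`, `w = a - b s` with `a, b ∈ K`. -/
def conjPair (K : Subfield ℂ) (s z w : ℂ) : Prop :=
  ∃ a b : ℂ, a ∈ K ∧ b ∈ K ∧ z = a + b * s ∧ w = a - b * s

noncomputable def lformR (a b : ℝ) : MvPolynomial (Fin 2) ℝ := C a * X 0 + C b * X 1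

noncomputable def rankR (d : ℕ) (p : MvPolynomial (Fin 2) ℝ) : ℕ :=
  sInf {r : ℕ | ∃ lam a b : Fin r → ℝ, p = ∑ j, C (lam j) * lformR (a j) (b j) ^ d}

/-! ### Auxiliary lemmas -/

noncomputable def mk2 (d k : ℕ) : Fin 2 →₀ ℕ := Finsupp.single 0 (d - k) + Finsupp.single 1 k

lemma lform_pow (a b : ℂ) (d : ℕ) :
    lform a b ^ d = ∑ k ∈ range (d + 1),
      monomial (mk2 d k) (a ^ (d - k) * b ^ k * (d.choose k : ℂ)) := by
  rw [lform, add_comm (C a * X 0), add_pow]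
  refine Finset.sum_congr rfl fun k hk => ?_
  simp only [mul_pow, ← C_pow, X_pow_eq_monomial, ← C_eq_coe_nat, mk2]
  rw [show ∀ p q r s : MvPolynomial (Fin 2) ℂ, (p * q) * (r * s) * C ((d.choose k : ℂ)) =
    (p * r * C ((d.choose k : ℂ))) * (q * s) from fun p q r s => by ring]
  rw [monomial_mul, ← C_mul, ← C_mul, C_mul_monomial, add_comm (Finsupp.single 1 k)]
  ring_nf

lemma mk2_inj {d k k' : ℕ} (h : mk2 d k' = mk2 d k) : k' = k := by
  have := congrArg (fun f => f 1) h
  simpa [mk2, Finsupp.single_apply] using this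

lemma coeff_lform_pow (a b : ℂ) {d k : ℕ} (hk : k ≤ d) :
    coeff (mk2 d k) (lform a b ^ d) = a ^ (d - k) * b ^ k * (d.choose k : ℂ) := by
  rw [lform_pow, coeff_sum]
  rw [Finset.sum_eq_single k]
  · simp [coeff_monomial]
  · intro k' _ hne
    rw [coeff_monomial, if_neg fun h => hne (mk2_inj h)]
  · intro h; exact absurd (Finset.mem_range.2 (by omega)) h

lemma term_rw (lam a b : ℂ) (ha : a ≠ 0) (d : ℕ) :
    C lam * lform a b ^ d = C (lam * a ^ d) * lform 1 (b / a) ^ d := by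
  have h : lform a b = C a * lform 1 (b / a) := by
    rw [lform, lform]
    rw [mul_add, ← mul_assoc, ← C_mul, ← mul_assoc, ← C_mul]
    rw [mul_one, mul_div_cancel₀ _ ha]
  rw [h, mul_pow, ← C_pow, ← mul_assoc, ← C_mul]

lemma natmemC (L : Subfield ℂ) (n : ℕ) : (n : ℂ) ∈ L := by
  exact_mod_cast natCast_mem L n
lemma twomemC (L : Subfield ℂ) : (2 : ℂ) ∈ L := by exact_mod_cast natmemC L 2
lemma threememC (L : Subfield ℂ) : (3 : ℂ) ∈ L := by exact_mod_cast natmemC L 3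

lemma coeff_term_mem (L : Subfield ℂ) (μ g : ℂ) (d : ℕ) (hμ : μ ∈ L) (hg : g ∈ L)
    (m : Fin 2 →₀ ℕ) : coeff m (C μ * lform 1 g ^ d) ∈ L := by
  rw [lform_pow, Finset.mul_sum, coeff_sum]
  refine sum_mem fun k _ => ?_
  rw [C_mul_monomial, coeff_monomial]
  split_ifs
  · exact mul_mem hμ (mul_mem (mul_mem (pow_mem (one_mem L) _) (pow_mem hg k))
      (natmemC L (d.choose k)))
  · exact zero_mem L

/-! ### conjPair lemmas -/

lemma cp_ofK {K : Subfield ℂ} {s x : ℂ} (hx : x ∈ K) : conjPair K s x x :=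
  ⟨x, 0, hx, zero_mem _, by ring, by ring⟩

lemma cp_swap {K : Subfield ℂ} {s z w : ℂ} (h : conjPair K s z w) : conjPair K s w z := by
  obtain ⟨a, b, ha, hb, rfl, rfl⟩ := h
  exact ⟨a, -b, ha, neg_mem hb, by ring, by ring⟩

lemma cp_add {K : Subfield ℂ} {s z w z' w' : ℂ}
    (h : conjPair K s z w) (h' : conjPair K s z' w') : conjPair K s (z + z') (w + w') := by
  obtain ⟨a, b, ha, hb, rfl, rfl⟩ := h
  obtain ⟨a', b', ha', hb', rfl, rfl⟩ := h'
  exact ⟨a + a', b + b', add_mem ha ha', add_mem hb hb', by ring, by ring⟩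

lemma cp_sub {K : Subfield ℂ} {s z w z' w' : ℂ}
    (h : conjPair K s z w) (h' : conjPair K s z' w') : conjPair K s (z - z') (w - w') := by
  obtain ⟨a, b, ha, hb, rfl, rfl⟩ := h
  obtain ⟨a', b', ha', hb', rfl, rfl⟩ := h'
  exact ⟨a - a', b - b', sub_mem ha ha', sub_mem hb hb', by ring, by ring⟩

lemma cp_mul {K : Subfield ℂ} {s : ℂ} (hs : s ^ 2 ∈ K) {z w z' w' : ℂ}
    (h : conjPair K s z w) (h' : conjPair K s z' w') : conjPair K s (z * z') (w * w') := by
  obtain ⟨a, b, ha, hb, rfl, rfl⟩ := h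
  obtain ⟨a', b', ha', hb', rfl, rfl⟩ := h'
  exact ⟨a * a' + b * b' * s ^ 2, a * b' + a' * b,
    add_mem (mul_mem ha ha') (mul_mem (mul_mem hb hb') hs),
    add_mem (mul_mem ha hb') (mul_mem ha' hb), by ring, by ring⟩

lemma cp_inv {K : Subfield ℂ} {s : ℂ} (hs : s ^ 2 ∈ K) {z w : ℂ} (hz : z ≠ 0) (hw : w ≠ 0)
    (h : conjPair K s z w) : conjPair K s z⁻¹ w⁻¹ := by
  obtain ⟨a, b, ha, hb, rfl, rfl⟩ := h
  have ht' : a ^ 2 - b ^ 2 * s ^ 2 ≠ 0 := by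
    intro h0; exact (mul_ne_zero hz hw) (by linear_combination h0)
  refine ⟨a / (a ^ 2 - b ^ 2 * s ^ 2), -b / (a ^ 2 - b ^ 2 * s ^ 2),
    div_mem ha (sub_mem (pow_mem ha 2) (mul_mem (pow_mem hb 2) hs)),
    div_mem (neg_mem hb) (sub_mem (pow_mem ha 2) (mul_mem (pow_mem hb 2) hs)), ?_, ?_⟩
  · refine inv_eq_of_mul_eq_one_right ?_
    field_simp; ring
  · refine inv_eq_of_mul_eq_one_right ?_
    field_simp; ring

lemma cp_pow {K : Subfield ℂ} {s : ℂ} (hs : s ^ 2 ∈ K) {z w : ℂ}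
    (h : conjPair K s z w) (n : ℕ) : conjPair K s (z ^ n) (w ^ n) := by
  induction n with
  | zero => simpa using cp_ofK (one_mem K)
  | succ n ih => rw [pow_succ, pow_succ]; exact cp_mul hs ih h

lemma cp_sum {K : Subfield ℂ} {s : ℂ} {t : Finset ℕ} {f g : ℕ → ℂ}
    (h : ∀ k ∈ t, conjPair K s (f k) (g k)) :
    conjPair K s (∑ k ∈ t, f k) (∑ k ∈ t, g k) := by
  classical
  induction t using Finset.induction with
  | empty => exact ⟨0, 0, zero_mem _, zero_mem _, by simp, by simp⟩
  | @insert x t hx ih =>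
    rw [Finset.sum_insert hx, Finset.sum_insert hx]
    obtain ⟨a, b, ha, hb, h1, h2⟩ := h _ (Finset.mem_insert_self _ _)
    obtain ⟨a', b', ha', hb', h1', h2'⟩ := ih fun k hk => h k (Finset.mem_insert_of_mem hk)
    exact ⟨a + a', b + b', add_mem ha ha', add_mem hb hb',
      by rw [h1, h1']; ring, by rw [h2, h2']; ring⟩

lemma coeff_term_cp (K : Subfield ℂ) (s : ℂ) (hsK : s ^ 2 ∈ K) (μj μl gj gl : ℂ) (d : ℕ)
    (hμ : conjPair K s μj μl) (hg : conjPair K s gj gl) (m : Fin 2 →₀ ℕ) :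
    conjPair K s (coeff m (C μj * lform 1 gj ^ d)) (coeff m (C μl * lform 1 gl ^ d)) := by
  rw [lform_pow, Finset.mul_sum, coeff_sum, lform_pow, Finset.mul_sum, coeff_sum]
  refine cp_sum fun k _ => ?_
  rw [C_mul_monomial, coeff_monomial, C_mul_monomial, coeff_monomial]
  split_ifs
  · exact cp_mul hsK hμ (cp_mul hsK (cp_mul hsK (cp_ofK (pow_mem (one_mem K) _))
      (cp_pow hsK hg k)) (cp_ofK (natmemC K (d.choose k))))
  · exact cp_ofK (zero_mem K)

/-! ### pure complex-number lemmas -/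

lemma key5 (m0 m1 m2 g0 g1 g2 r0 r1 d0 d1 : ℂ)
    (h0 : m0 + m1 + m2 = r0 + r1)
    (h1 : m0*g0 + m1*g1 + m2*g2 = r0*d0 + r1*d1)
    (h2 : m0*g0^2 + m1*g1^2 + m2*g2^2 = r0*d0^2 + r1*d1^2)
    (h3 : m0*g0^3 + m1*g1^3 + m2*g2^3 = r0*d0^3 + r1*d1^3)
    (h4 : m0*g0^4 + m1*g1^4 + m2*g2^4 = r0*d0^4 + r1*d1^4) :
    m0 * ((g0-g1)*(g0-g2)*(g0-d0)*(g0-d1)) = 0 := by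
  linear_combination h4 - (g1+g2+d0+d1)*h3 + (g1*g2+g1*d0+g1*d1+g2*d0+g2*d1+d0*d1)*h2
    - (g1*g2*d0+g1*g2*d1+g1*d0*d1+g2*d0*d1)*h1 + (g1*g2*d0*d1)*h0

lemma mu_mem (L : Subfield ℂ) (m0 m1 m2 g0 g1 g2 : ℂ)
    (h01 : g0 ≠ g1) (h02 : g0 ≠ g2)
    (hg0 : g0 ∈ L) (hg1 : g1 ∈ L) (hg2 : g2 ∈ L)
    (hc0 : m0 + m1 + m2 ∈ L) (hc1 : m0*g0 + m1*g1 + m2*g2 ∈ L)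
    (hc2 : m0*g0^2 + m1*g1^2 + m2*g2^2 ∈ L) : m0 ∈ L := by
  have hne : (g0 - g1) * (g0 - g2) ≠ 0 :=
    mul_ne_zero (sub_ne_zero.2 h01) (sub_ne_zero.2 h02)
  have key : m0 = ((m0*g0^2 + m1*g1^2 + m2*g2^2) - (g1 + g2)*(m0*g0 + m1*g1 + m2*g2)
      + g1*g2*(m0 + m1 + m2)) / ((g0 - g1) * (g0 - g2)) := by
    field_simp
    ring
  rw [key]
  exact div_mem (add_mem (sub_mem hc2 (mul_mem (add_mem hg1 hg2) hc1))
    (mul_mem (mul_mem hg1 hg2) hc0)) (mul_mem (sub_mem hg0 hg1) (sub_mem hg0 hg2))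

lemma e_mem (L : Subfield ℂ) (m0 m1 m2 g0 g1 g2 : ℂ)
    (hm0 : m0 ≠ 0) (hm1 : m1 ≠ 0) (hm2 : m2 ≠ 0)
    (h01 : g0 ≠ g1) (h02 : g0 ≠ g2) (h12 : g1 ≠ g2)
    (hc0 : m0 + m1 + m2 ∈ L)
    (hc1 : m0*g0 + m1*g1 + m2*g2 ∈ L)
    (hc2 : m0*g0^2 + m1*g1^2 + m2*g2^2 ∈ L)
    (hc3 : m0*g0^3 + m1*g1^3 + m2*g2^3 ∈ L)
    (hc4 : m0*g0^4 + m1*g1^4 + m2*g2^4 ∈ L)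
    (hc5 : m0*g0^5 + m1*g1^5 + m2*g2^5 ∈ L) :
    g0 + g1 + g2 ∈ L ∧ g0*g1 + g0*g2 + g1*g2 ∈ L ∧ g0*g1*g2 ∈ L := by
  set c0 := m0 + m1 + m2 with hC0
  set c1 := m0*g0 + m1*g1 + m2*g2 with hC1
  set c2 := m0*g0^2 + m1*g1^2 + m2*g2^2 with hC2
  set c3 := m0*g0^3 + m1*g1^3 + m2*g2^3 with hC3
  set c4 := m0*g0^4 + m1*g1^4 + m2*g2^4 with hC4
  set c5 := m0*g0^5 + m1*g1^5 + m2*g2^5 with hC5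
  have hD : c0*(c2*c4 - c3^2) - c1*(c1*c4 - c2*c3) + c2*(c1*c3 - c2^2)
      = m0*m1*m2*((g0-g1)*(g0-g2)*(g1-g2))^2 := by
    simp only [hC0, hC1, hC2, hC3, hC4, hC5]; ring
  have hDne : c0*(c2*c4 - c3^2) - c1*(c1*c4 - c2*c3) + c2*(c1*c3 - c2^2) ≠ 0 := by
    rw [hD]
    exact mul_ne_zero (mul_ne_zero (mul_ne_zero hm0 hm1) hm2) (pow_ne_zero _ (mul_ne_zero
      (mul_ne_zero (sub_ne_zero.2 h01) (sub_ne_zero.2 h02)) (sub_ne_zero.2 h12)))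
  set D := c0*(c2*c4 - c3^2) - c1*(c1*c4 - c2*c3) + c2*(c1*c3 - c2^2) with hDdef
  have hDL : D ∈ L := by
    rw [hDdef]
    exact add_mem (sub_mem (mul_mem hc0 (sub_mem (mul_mem hc2 hc4) (pow_mem hc3 2)))
      (mul_mem hc1 (sub_mem (mul_mem hc1 hc4) (mul_mem hc2 hc3))))
      (mul_mem hc2 (sub_mem (mul_mem hc1 hc3) (pow_mem hc2 2)))
  refine ⟨?_, ?_, ?_⟩
  · have key : g0 + g1 + g2 =
        (c0*(c2*c5 - c3*c4) - c1*(c1*c5 - c2*c4) + c3*(c1*c3 - c2^2)) / D := by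
      rw [eq_div_iff hDne]; simp only [hDdef, hC0, hC1, hC2, hC3, hC4, hC5]; ring
    rw [key]
    exact div_mem (add_mem (sub_mem (mul_mem hc0 (sub_mem (mul_mem hc2 hc5) (mul_mem hc3 hc4)))
      (mul_mem hc1 (sub_mem (mul_mem hc1 hc5) (mul_mem hc2 hc4))))
      (mul_mem hc3 (sub_mem (mul_mem hc1 hc3) (pow_mem hc2 2)))) hDL
  · have key : g0*g1 + g0*g2 + g1*g2 =
        (c0*(c3*c5 - c4^2) - c1*(c2*c5 - c3*c4) + c2*(c2*c4 - c3^2)) / D := by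
      rw [eq_div_iff hDne]; simp only [hDdef, hC0, hC1, hC2, hC3, hC4, hC5]; ring
    rw [key]
    exact div_mem (add_mem (sub_mem (mul_mem hc0 (sub_mem (mul_mem hc3 hc5) (pow_mem hc4 2)))
      (mul_mem hc1 (sub_mem (mul_mem hc2 hc5) (mul_mem hc3 hc4))))
      (mul_mem hc2 (sub_mem (mul_mem hc2 hc4) (pow_mem hc3 2)))) hDL
  · have key : g0*g1*g2 =
        (c1*(c3*c5 - c4^2) - c2*(c2*c5 - c3*c4) + c3*(c2*c4 - c3^2)) / D := by
      rw [eq_div_iff hDne]; simp only [hDdef, hC0, hC1, hC2, hC3, hC4, hC5]; ring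
    rw [key]
    exact div_mem (add_mem (sub_mem (mul_mem hc1 (sub_mem (mul_mem hc3 hc5) (pow_mem hc4 2)))
      (mul_mem hc2 (sub_mem (mul_mem hc2 hc5) (mul_mem hc3 hc4))))
      (mul_mem hc3 (sub_mem (mul_mem hc2 hc4) (pow_mem hc3 2)))) hDL

lemma other_roots_mem (L : Subfield ℂ) (gi gj gl s : ℂ)
    (hij : gi ≠ gj) (hil : gi ≠ gl)
    (he1L : gi + gj + gl ∈ L) (he2L : gi*gj + gi*gl + gj*gl ∈ L)
    (hgi : gi ∈ L) (hsL : s ∈ L)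
    (hs : s^2 = ((gi - gj)*(gi - gl)*(gj - gl))^2) : gj ∈ L ∧ gl ∈ L := by
  set T := (gi - gj)*(gi - gl) with hT
  have hTne : T ≠ 0 := mul_ne_zero (sub_ne_zero.2 hij) (sub_ne_zero.2 hil)
  have hTL : T ∈ L := by
    have h : T = 3*gi^2 - (gi + gj + gl)*(2*gi) + (gi*gj + gi*gl + gj*gl) := by
      rw [hT]; ring
    rw [h]
    exact add_mem (sub_mem (mul_mem (threememC L) (pow_mem hgi 2))
      (mul_mem he1L (mul_mem (twomemC L) hgi))) he2L
  have hfac : ((gj - gl)*T - s) * ((gj - gl)*T + s) = 0 := by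
    rw [hT]; linear_combination -hs
  have hdiff : gj - gl ∈ L := by
    rcases mul_eq_zero.1 hfac with h | h
    · have h2 : gj - gl = s / T := by rw [eq_div_iff hTne]; linear_combination h
      rw [h2]; exact div_mem hsL hTL
    · have h2 : gj - gl = -s / T := by rw [eq_div_iff hTne]; linear_combination h
      rw [h2]; exact div_mem (neg_mem hsL) hTL
  have hsum : gj + gl ∈ L := by
    have h : gj + gl = (gi + gj + gl) - gi := by ring
    rw [h]; exact sub_mem he1L hgi
  constructor
  · have h : gj = ((gj + gl) + (gj - gl)) / 2 := by ring
    rw [h]; exact div_mem (add_mem hsum hdiff) (twomemC L)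
  · have h : gl = ((gj + gl) - (gj - gl)) / 2 := by ring
    rw [h]; exact div_mem (sub_mem hsum hdiff) (twomemC L)

lemma case3_core (K : Subfield ℂ) (s : ℂ) (μi μj μl gi gj gl : ℂ)
    (hgiK : gi ∈ K) (hij : gi ≠ gj) (hil : gi ≠ gl) (hjl : gj ≠ gl)
    (he1 : gi + gj + gl ∈ K) (he2 : gi*gj + gi*gl + gj*gl ∈ K)
    (hc0 : μi + μj + μl ∈ K) (hc1 : μi*gi + μj*gj + μl*gl ∈ K)
    (hc2 : μi*gi^2 + μj*gj^2 + μl*gl^2 ∈ K)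
    (hsK : s^2 ∈ K)
    (hs : s^2 = ((gi - gj)*(gi - gl)*(gj - gl))^2) :
    μi ∈ K ∧ conjPair K s gj gl ∧ conjPair K s μj μl := by
  set T := (gi - gj)*(gi - gl) with hT
  have hTne : T ≠ 0 := mul_ne_zero (sub_ne_zero.2 hij) (sub_ne_zero.2 hil)
  have hTK : T ∈ K := by
    have h : T = 3*gi^2 - (gi + gj + gl)*(2*gi) + (gi*gj + gi*gl + gj*gl) := by
      rw [hT]; ring
    rw [h]
    exact add_mem (sub_mem (mul_mem (threememC K) (pow_mem hgiK 2))
      (mul_mem he1 (mul_mem (twomemC K) hgiK))) he2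
  have hsumK : gj + gl ∈ K := by
    have h : gj + gl = (gi + gj + gl) - gi := by ring
    rw [h]; exact sub_mem he1 hgiK
  have hprodK : gj * gl ∈ K := by
    have h : gj * gl = (gi*gj + gi*gl + gj*gl) - gi * ((gi + gj + gl) - gi) := by ring
    rw [h]; exact sub_mem he2 (mul_mem hgiK (sub_mem he1 hgiK))
  have hmi : μi ∈ K := by
    have key : μi = ((μi*gi^2 + μj*gj^2 + μl*gl^2) - (gj + gl)*(μi*gi + μj*gj + μl*gl)
        + gj*gl*(μi + μj + μl)) / T := by
      rw [eq_div_iff hTne, hT]; ring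
    rw [key]
    exact div_mem (add_mem (sub_mem hc2 (mul_mem hsumK hc1)) (mul_mem hprodK hc0)) hTK
  have hfac : ((gj - gl)*T - s) * ((gj - gl)*T + s) = 0 := by
    rw [hT]; linear_combination -hs
  have cpg : conjPair K s gj gl := by
    rcases mul_eq_zero.1 hfac with h | h
    · have h' : s = (gj - gl) * T := by linear_combination -h
      refine ⟨(gj + gl)/2, 1/(2*T), div_mem hsumK (twomemC K),
        div_mem (one_mem K) (mul_mem (twomemC K) hTK), ?_, ?_⟩
      · rw [h']; field_simp; ring
      · rw [h']; field_simp; ring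
    · have h' : s = -((gj - gl) * T) := by linear_combination h
      refine ⟨(gj + gl)/2, -(1/(2*T)), div_mem hsumK (twomemC K),
        neg_mem (div_mem (one_mem K) (mul_mem (twomemC K) hTK)), ?_, ?_⟩
      · rw [h']; field_simp; ring
      · rw [h']; field_simp; ring
  have hDjne : (gj - gi) * (gj - gl) ≠ 0 :=
    mul_ne_zero (sub_ne_zero.2 (Ne.symm hij)) (sub_ne_zero.2 hjl)
  have hDlne : (gl - gi) * (gl - gj) ≠ 0 :=
    mul_ne_zero (sub_ne_zero.2 (Ne.symm hil)) (sub_ne_zero.2 (Ne.symm hjl))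
  have cpD : conjPair K s ((gj - gi) * (gj - gl)) ((gl - gi) * (gl - gj)) :=
    cp_mul hsK (cp_sub cpg (cp_ofK hgiK)) (cp_sub cpg (cp_swap cpg))
  have cpN : conjPair K s
      ((μi*gi^2 + μj*gj^2 + μl*gl^2) - (gi + gl)*(μi*gi + μj*gj + μl*gl)
        + gi*gl*(μi + μj + μl))
      ((μi*gi^2 + μj*gj^2 + μl*gl^2) - (gi + gj)*(μi*gi + μj*gj + μl*gl)
        + gi*gj*(μi + μj + μl)) := by
    refine cp_add (cp_sub (cp_ofK hc2) (cp_mul hsK (cp_add (cp_ofK hgiK) (cp_swap cpg))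
      (cp_ofK hc1))) (cp_mul hsK (cp_mul hsK (cp_ofK hgiK) (cp_swap cpg)) (cp_ofK hc0))
  have hmj : μj = ((μi*gi^2 + μj*gj^2 + μl*gl^2) - (gi + gl)*(μi*gi + μj*gj + μl*gl)
      + gi*gl*(μi + μj + μl)) * ((gj - gi) * (gj - gl))⁻¹ := by
    rw [eq_mul_inv_iff_mul_eq₀ hDjne]; ring
  have hml : μl = ((μi*gi^2 + μj*gj^2 + μl*gl^2) - (gi + gj)*(μi*gi + μj*gj + μl*gl)
      + gi*gj*(μi + μj + μl)) * ((gl - gi) * (gl - gj))⁻¹ := by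
    rw [eq_mul_inv_iff_mul_eq₀ hDlne]; ring
  refine ⟨hmi, cpg, ?_⟩
  obtain ⟨a, b, ha, hb, h1, h2⟩ := cp_mul hsK cpN (cp_inv hsK hDjne hDlne cpD)
  exact ⟨a, b, ha, hb, by rw [hmj]; exact h1, by rw [hml]; exact h2⟩

lemma rank_lower (d : ℕ) (hd : 5 ≤ d) (μ γ : Fin 3 → ℂ) (hμ : ∀ i, μ i ≠ 0)
    (hdist : ∀ i j : Fin 3, i ≠ j → γ i ≠ γ j)
    (r : ℕ) (ν a b : Fin r → ℂ)
    (heq : ∑ i : Fin 3, C (μ i) * lform 1 (γ i) ^ d = ∑ j, C (ν j) * lform (a j) (b j) ^ d) :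
    3 ≤ r := by
  by_contra hlt
  push_neg at hlt
  obtain ⟨ν', a', b', heq2⟩ : ∃ ν' a' b' : Fin 2 → ℂ,
      (∑ j, C (ν j) * lform (a j) (b j) ^ d : MvPolynomial (Fin 2) ℂ)
        = ∑ j : Fin 2, C (ν' j) * lform (a' j) (b' j) ^ d := by
    interval_cases r
    · exact ⟨0, 0, 0, by simp⟩
    · exact ⟨![ν 0, 0], ![a 0, 0], ![b 0, 0], by
        simp [Fin.sum_univ_two, Fin.sum_univ_one]⟩
    · exact ⟨ν, a, b, rfl⟩
  rw [heq2] at heq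
  have E : ∀ k, k ≤ 4 → μ 0 * γ 0 ^ k + μ 1 * γ 1 ^ k + μ 2 * γ 2 ^ k
      = ν' 0 * (a' 0 ^ (d - k) * b' 0 ^ k) + ν' 1 * (a' 1 ^ (d - k) * b' 1 ^ k) := by
    intro k hk
    have hkd : k ≤ d := by omega
    have h1 := congrArg (coeff (mk2 d k)) heq
    rw [coeff_sum, coeff_sum, Fin.sum_univ_three, Fin.sum_univ_two] at h1
    simp only [coeff_C_mul, coeff_lform_pow _ _ hkd, one_pow] at h1
    have hch : ((d.choose k : ℂ)) ≠ 0 := Nat.cast_ne_zero.2 (Nat.choose_pos hkd).ne'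
    refine mul_right_cancel₀ hch ?_
    linear_combination h1
  set δ : Fin 2 → ℂ := fun j => if a' j = 0 then 0 else b' j / a' j with hδ
  set ρ : Fin 2 → ℂ := fun j => if a' j = 0 then 0 else ν' j * a' j ^ d with hρ
  have hterm : ∀ (j : Fin 2) k, k ≤ 4 →
      ν' j * (a' j ^ (d - k) * b' j ^ k) = ρ j * δ j ^ k := by
    intro j k hk
    by_cases h : a' j = 0
    · simp [hρ, hδ, h, zero_pow (show d - k ≠ 0 by omega)]
    · simp only [hρ, hδ, if_neg h]
      have hb : b' j = a' j * (b' j / a' j) := by field_simp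
      rw [hb, mul_pow]
      rw [show a' j ^ (d - k) * (a' j ^ k * (b' j / a' j) ^ k)
        = (a' j ^ (d - k) * a' j ^ k) * (b' j / a' j) ^ k from by ring]
      rw [← pow_add, show d - k + k = d from by omega]
      rw [show a' j * (b' j / a' j) / a' j = b' j / a' j from by field_simp]
      ring
  have E' : ∀ k, k ≤ 4 → μ 0 * γ 0 ^ k + μ 1 * γ 1 ^ k + μ 2 * γ 2 ^ k
      = ρ 0 * δ 0 ^ k + ρ 1 * δ 1 ^ k := by
    intro k hk
    rw [← hterm 0 k hk, ← hterm 1 k hk]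
    exact E k hk
  obtain ⟨i, hi0, hi1⟩ : ∃ i : Fin 3, γ i ≠ δ 0 ∧ γ i ≠ δ 1 := by
    by_contra h
    push_neg at h
    rcases eq_or_ne (γ 0) (δ 0) with e0 | e0
    · rcases eq_or_ne (γ 1) (δ 0) with e1 | e1
      · exact hdist 0 1 (by decide) (e0.trans e1.symm)
      · rcases eq_or_ne (γ 2) (δ 0) with e2 | e2
        · exact hdist 0 2 (by decide) (e0.trans e2.symm)
        · exact hdist 1 2 (by decide) ((h 1 e1).trans (h 2 e2).symm)
    · rcases eq_or_ne (γ 1) (δ 0) with e1 | e1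
      · rcases eq_or_ne (γ 2) (δ 0) with e2 | e2
        · exact hdist 1 2 (by decide) (e1.trans e2.symm)
        · exact hdist 0 2 (by decide) ((h 0 e0).trans (h 2 e2).symm)
      · exact hdist 0 1 (by decide) ((h 0 e0).trans (h 1 e1).symm)
  have E0 := E' 0 (by omega); have E1 := E' 1 (by omega); have E2 := E' 2 (by omega)
  have E3 := E' 3 (by omega); have E4 := E' 4 (by omega)
  fin_cases i
  · have hkey := key5 (μ 0) (μ 1) (μ 2) (γ 0) (γ 1) (γ 2) (ρ 0) (ρ 1) (δ 0) (δ 1)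
      (by linear_combination E0) (by linear_combination E1) (by linear_combination E2)
      (by linear_combination E3) (by linear_combination E4)
    exact hμ 0 ((mul_eq_zero.1 hkey).resolve_right (by
      refine mul_ne_zero (mul_ne_zero (mul_ne_zero ?_ ?_) ?_) ?_ <;>
        exact sub_ne_zero.2 (by first
          | exact hdist 0 1 (by decide) | exact hdist 0 2 (by decide)
          | exact hi0 | exact hi1)))
  · have hkey := key5 (μ 1) (μ 0) (μ 2) (γ 1) (γ 0) (γ 2) (ρ 0) (ρ 1) (δ 0) (δ 1)
      (by linear_combination E0) (by linear_combination E1) (by linear_combination E2)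
      (by linear_combination E3) (by linear_combination E4)
    exact hμ 1 ((mul_eq_zero.1 hkey).resolve_right (by
      refine mul_ne_zero (mul_ne_zero (mul_ne_zero ?_ ?_) ?_) ?_ <;>
        exact sub_ne_zero.2 (by first
          | exact hdist 1 0 (by decide) | exact hdist 1 2 (by decide)
          | exact hi0 | exact hi1)))
  · have hkey := key5 (μ 2) (μ 0) (μ 1) (γ 2) (γ 0) (γ 1) (ρ 0) (ρ 1) (δ 0) (δ 1)
      (by linear_combination E0) (by linear_combination E1) (by linear_combination E2)
      (by linear_combination E3) (by linear_combination E4)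
    exact hμ 2 ((mul_eq_zero.1 hkey).resolve_right (by
      refine mul_ne_zero (mul_ne_zero (mul_ne_zero ?_ ?_) ?_) ?_ <;>
        exact sub_ne_zero.2 (by first
          | exact hdist 2 0 (by decide) | exact hdist 2 1 (by decide)
          | exact hi0 | exact hi1)))

lemma three_sum (v : Fin 3 → ℂ) (i j k : Fin 3) (hij : i ≠ j) (hik : i ≠ k) (hjk : j ≠ k) :
    v i + v j + v k = v 0 + v 1 + v 2 := by
  have huniv : ({i, j, k} : Finset (Fin 3)) = Finset.univ := by
    apply Finset.eq_univ_of_card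
    rw [Finset.card_insert_of_notMem (by simp [hij, hik]),
      Finset.card_insert_of_notMem (by simp [hjk]), Finset.card_singleton]
    rfl
  calc v i + v j + v k
      = ∑ t ∈ ({i, j, k} : Finset (Fin 3)), v t := by
        rw [Finset.sum_insert (by simp [hij, hik]), Finset.sum_insert (by simp [hjk]),
          Finset.sum_singleton]; ring
    _ = ∑ t, v t := by rw [huniv]
    _ = v 0 + v 1 + v 2 := by rw [Fin.sum_univ_three]

/-- **Binary forms of Waring rank 3.** Suppose `p = Σᵢ λᵢ(αᵢx + βᵢy)^d ∈ K[x,y]` is an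
honest representation with `d ≥ 5`, `αᵢ ≠ 0`, and `L_K(p) > 3`. With `γᵢ = βᵢ/αᵢ` and
`u` the discriminant of `(t-γ₁)(t-γ₂)(t-γ₃)`: the cubic `(y-γ₁x)(y-γ₂x)(y-γ₃x)` has
coefficients in `K`, `u ∈ K`, at most one `γᵢ` lies in `K`, and the three case
conclusions hold. -/
theorem rank_three_classification (K : Subfield ℂ) (d : ℕ) (hd : 5 ≤ d)
    (lam al be : Fin 3 → ℂ) (hal : ∀ i, al i ≠ 0)
    (p : MvPolynomial (Fin 2) ℂ)
    (hp : p = ∑ i, C (lam i) * lform (al i) (be i) ^ d)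
    (hpK : ∀ m, p.coeff m ∈ K)
    (honest : ∀ i j, i ≠ j → lam i * lam j * (al i * be j - al j * be i) ≠ 0)
    (hrk : 3 < rankIn K d p)
    (γ : Fin 3 → ℂ) (hγ : ∀ i, γ i = be i / al i)
    (u : ℂ) (hu : u = (γ 0 - γ 1) ^ 2 * (γ 0 - γ 2) ^ 2 * (γ 1 - γ 2) ^ 2) :
    (∀ m, ((X 1 - C (γ 0) * X 0) * (X 1 - C (γ 1) * X 0) * (X 1 - C (γ 2) * X 0) :
      MvPolynomial (Fin 2) ℂ).coeff m ∈ K) ∧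
    u ∈ K ∧
    (∀ i j, γ i ∈ K → γ j ∈ K → i = j) ∧
    -- Case 1: no `γᵢ` in `K` and `√u ∈ K`
    ((∀ i, γ i ∉ K) → (∃ s ∈ K, s ^ 2 = u) →
      ∀ i, rankIn (adj K {γ i}) d p = 3) ∧
    -- Case 2: no `γᵢ` in `K` and `√u ∉ K`
    ((∀ i, γ i ∉ K) → (∀ s : ℂ, s ^ 2 = u → s ∉ K) →
      ∀ i, ∀ s : ℂ, s ^ 2 = u → rankIn (adj K {γ i, s}) d p = 3) ∧
    -- Case 3: exactly one `γᵢ` in `K`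
    ((∃! i, γ i ∈ K) → ∀ s : ℂ, s ^ 2 = u →
      rankIn (adj K {s}) d p = 3 ∧
      ∃ i j l : Fin 3, i ≠ j ∧ i ≠ l ∧ j ≠ l ∧
        (∀ m, (C (lam i) * lform (al i) (be i) ^ d).coeff m ∈ K) ∧
        (∀ m, conjPair K s ((C (lam j) * lform (al j) (be j) ^ d).coeff m)
          ((C (lam l) * lform (al l) (be l) ^ d).coeff m))) := by
  -- basic setup
  have hbe : ∀ i, be i = al i * γ i := by
    intro i; rw [hγ i, mul_comm, div_mul_cancel₀ _ (hal i)]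
  have hlam : ∀ i, lam i ≠ 0 := by
    intro i hz
    fin_cases i
    · exact honest 0 1 (by decide) (by rw [show lam 0 = 0 from hz]; ring)
    · exact honest 1 0 (by decide) (by rw [show lam 1 = 0 from hz]; ring)
    · exact honest 2 0 (by decide) (by rw [show lam 2 = 0 from hz]; ring)
  have hdist : ∀ i j : Fin 3, i ≠ j → γ i ≠ γ j := by
    intro i j hij hgeq
    exact honest i j hij (by rw [hbe i, hbe j, hgeq]; ring)
  set μ : Fin 3 → ℂ := fun i => lam i * al i ^ d with hμdef
  have hμne : ∀ i, μ i ≠ 0 := fun i => mul_ne_zero (hlam i) (pow_ne_zero _ (hal i))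
  have hterm : ∀ i, C (lam i) * lform (al i) (be i) ^ d = C (μ i) * lform 1 (γ i) ^ d := by
    intro i
    rw [term_rw (lam i) (al i) (be i) (hal i) d, ← hγ i]
  have hp2 : p = ∑ i : Fin 3, C (μ i) * lform 1 (γ i) ^ d := by
    rw [hp]; exact Finset.sum_congr rfl fun i _ => hterm i
  -- power-sum coefficients lie in K
  have hc : ∀ k, k ≤ d → μ 0 * γ 0 ^ k + μ 1 * γ 1 ^ k + μ 2 * γ 2 ^ k ∈ K := by
    intro k hk
    have hcoeff : coeff (mk2 d k) p
        = (μ 0 * γ 0 ^ k + μ 1 * γ 1 ^ k + μ 2 * γ 2 ^ k) * (d.choose k : ℂ) := by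
      rw [hp2, coeff_sum, Fin.sum_univ_three]
      simp only [coeff_C_mul, coeff_lform_pow _ _ hk, one_pow]
      ring
    have hch : ((d.choose k : ℂ)) ≠ 0 := Nat.cast_ne_zero.2 (Nat.choose_pos hk).ne'
    have h2 : μ 0 * γ 0 ^ k + μ 1 * γ 1 ^ k + μ 2 * γ 2 ^ k
        = coeff (mk2 d k) p / (d.choose k : ℂ) := by
      rw [hcoeff]; field_simp
    rw [h2]; exact div_mem (hpK _) (natmemC K _)
  have hc0' : μ 0 + μ 1 + μ 2 ∈ K := by
    have := hc 0 (by omega); simpa using this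
  have hc1' : μ 0 * γ 0 + μ 1 * γ 1 + μ 2 * γ 2 ∈ K := by
    have := hc 1 (by omega); simpa using this
  -- elementary symmetric functions lie in K
  obtain ⟨he1K, he2K, he3K⟩ := e_mem K (μ 0) (μ 1) (μ 2) (γ 0) (γ 1) (γ 2)
    (hμne 0) (hμne 1) (hμne 2)
    (hdist 0 1 (by decide)) (hdist 0 2 (by decide)) (hdist 1 2 (by decide))
    hc0' hc1' (hc 2 (by omega)) (hc 3 (by omega)) (hc 4 (by omega)) (hc 5 (by omega))
  -- the rank-3 lemma
  have rank3 : ∀ L : Subfield ℂ, K ≤ L → (∀ i, γ i ∈ L) → rankIn L d p = 3 := by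
    intro L hKL hγL
    have hμL : ∀ i, μ i ∈ L := by
      intro i
      fin_cases i
      · exact mu_mem L (μ 0) (μ 1) (μ 2) (γ 0) (γ 1) (γ 2)
          (hdist 0 1 (by decide)) (hdist 0 2 (by decide)) (hγL 0) (hγL 1) (hγL 2)
          (hKL hc0') (hKL hc1') (hKL (hc 2 (by omega)))
      · refine mu_mem L (μ 1) (μ 0) (μ 2) (γ 1) (γ 0) (γ 2)
          (hdist 1 0 (by decide)) (hdist 1 2 (by decide)) (hγL 1) (hγL 0) (hγL 2) ?_ ?_ ?_
        · rw [show μ 1 + μ 0 + μ 2 = μ 0 + μ 1 + μ 2 from by ring]; exact hKL hc0'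
        · rw [show μ 1 * γ 1 + μ 0 * γ 0 + μ 2 * γ 2
            = μ 0 * γ 0 + μ 1 * γ 1 + μ 2 * γ 2 from by ring]; exact hKL hc1'
        · rw [show μ 1 * γ 1 ^ 2 + μ 0 * γ 0 ^ 2 + μ 2 * γ 2 ^ 2
            = μ 0 * γ 0 ^ 2 + μ 1 * γ 1 ^ 2 + μ 2 * γ 2 ^ 2 from by ring]
          exact hKL (hc 2 (by omega))
      · refine mu_mem L (μ 2) (μ 0) (μ 1) (γ 2) (γ 0) (γ 1)
          (hdist 2 0 (by decide)) (hdist 2 1 (by decide)) (hγL 2) (hγL 0) (hγL 1) ?_ ?_ ?_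
        · rw [show μ 2 + μ 0 + μ 1 = μ 0 + μ 1 + μ 2 from by ring]; exact hKL hc0'
        · rw [show μ 2 * γ 2 + μ 0 * γ 0 + μ 1 * γ 1
            = μ 0 * γ 0 + μ 1 * γ 1 + μ 2 * γ 2 from by ring]; exact hKL hc1'
        · rw [show μ 2 * γ 2 ^ 2 + μ 0 * γ 0 ^ 2 + μ 1 * γ 1 ^ 2
            = μ 0 * γ 0 ^ 2 + μ 1 * γ 1 ^ 2 + μ 2 * γ 2 ^ 2 from by ring]
          exact hKL (hc 2 (by omega))
    have hmem : 3 ∈ {r : ℕ | ∃ lam a b : Fin r → ℂ,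
        (∀ j, lam j ∈ L ∧ a j ∈ L ∧ b j ∈ L) ∧
        p = ∑ j, C (lam j) * lform (a j) (b j) ^ d} :=
      ⟨μ, fun _ => 1, γ, fun j => ⟨hμL j, one_mem L, hγL j⟩, hp2⟩
    refine le_antisymm (Nat.sInf_le hmem) (le_csInf ⟨3, hmem⟩ ?_)
    rintro r ⟨ν, a, b, -, hpr⟩
    exact rank_lower d hd μ γ hμne hdist r ν a b (hp2.symm.trans hpr)
  -- all roots lie in L given one root and a square root of u
  have hγall : ∀ L : Subfield ℂ, K ≤ L → ∀ s : ℂ, s ^ 2 = u → s ∈ L →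
      ∀ i : Fin 3, γ i ∈ L → ∀ j : Fin 3, γ j ∈ L := by
    intro L hKL s hs2 hsL i hiL j
    fin_cases i
    · obtain ⟨hA, hB⟩ := other_roots_mem L (γ 0) (γ 1) (γ 2) s
        (hdist 0 1 (by decide)) (hdist 0 2 (by decide)) (hKL he1K) (hKL he2K) hiL hsL
        (by rw [hs2, hu]; ring)
      fin_cases j
      · exact hiL
      · exact hA
      · exact hB
    · obtain ⟨hA, hB⟩ := other_roots_mem L (γ 1) (γ 0) (γ 2) s
        (hdist 1 0 (by decide)) (hdist 1 2 (by decide))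
        (by rw [show γ 1 + γ 0 + γ 2 = γ 0 + γ 1 + γ 2 from by ring]; exact hKL he1K)
        (by rw [show γ 1 * γ 0 + γ 1 * γ 2 + γ 0 * γ 2
            = γ 0 * γ 1 + γ 0 * γ 2 + γ 1 * γ 2 from by ring]; exact hKL he2K)
        hiL hsL (by rw [hs2, hu]; ring)
      fin_cases j
      · exact hA
      · exact hiL
      · exact hB
    · obtain ⟨hA, hB⟩ := other_roots_mem L (γ 2) (γ 0) (γ 1) s
        (hdist 2 0 (by decide)) (hdist 2 1 (by decide))
        (by rw [show γ 2 + γ 0 + γ 1 = γ 0 + γ 1 + γ 2 from by ring]; exact hKL he1K)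
        (by rw [show γ 2 * γ 0 + γ 2 * γ 1 + γ 0 * γ 1
            = γ 0 * γ 1 + γ 0 * γ 2 + γ 1 * γ 2 from by ring]; exact hKL he2K)
        hiL hsL (by rw [hs2, hu]; ring)
      fin_cases j
      · exact hA
      · exact hB
      · exact hiL
  -- u ∈ K
  have huK : u ∈ K := by
    have hform : u = (γ 0 + γ 1 + γ 2) ^ 2 * (γ 0 * γ 1 + γ 0 * γ 2 + γ 1 * γ 2) ^ 2
        - 4 * (γ 0 * γ 1 + γ 0 * γ 2 + γ 1 * γ 2) ^ 3
        - 4 * (γ 0 + γ 1 + γ 2) ^ 3 * (γ 0 * γ 1 * γ 2)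
        + 18 * (γ 0 + γ 1 + γ 2) * (γ 0 * γ 1 + γ 0 * γ 2 + γ 1 * γ 2) * (γ 0 * γ 1 * γ 2)
        - 27 * (γ 0 * γ 1 * γ 2) ^ 2 := by
      rw [hu]; ring
    rw [hform]
    have h4 : (4 : ℂ) ∈ K := by exact_mod_cast natmemC K 4
    have h18 : (18 : ℂ) ∈ K := by exact_mod_cast natmemC K 18
    have h27 : (27 : ℂ) ∈ K := by exact_mod_cast natmemC K 27
    exact sub_mem (add_mem (sub_mem (sub_mem (mul_mem (pow_mem he1K 2) (pow_mem he2K 2))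
      (mul_mem h4 (pow_mem he2K 3))) (mul_mem (mul_mem h4 (pow_mem he1K 3)) he3K))
      (mul_mem (mul_mem (mul_mem h18 he1K) he2K) he3K)) (mul_mem h27 (pow_mem he3K 2))
  -- at most one γ in K
  have hmost : ∀ i j : Fin 3, γ i ∈ K → γ j ∈ K → i = j := by
    intro i j hi hj
    by_contra hne
    have hall : ∀ k : Fin 3, γ k ∈ K := by
      intro k
      rcases eq_or_ne k i with rfl | hki
      · exact hi
      rcases eq_or_ne k j with rfl | hkj
      · exact hj
      have hsum : γ k = (γ 0 + γ 1 + γ 2) - γ i - γ j := by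
        have h3s := three_sum γ i j k hne (Ne.symm hki) (Ne.symm hkj)
        linear_combination h3s
      rw [hsum]
      exact sub_mem (sub_mem he1K hi) hj
    have h3 := rank3 K le_rfl hall
    omega
  -- cubic coefficients
  have hmono : ∀ (m n : Fin 2 →₀ ℕ), coeff m (monomial n (1 : ℂ)) ∈ K := by
    intro m n
    rw [coeff_monomial]
    split_ifs
    · exact one_mem K
    · exact zero_mem K
  have hcubic : ∀ m, ((X 1 - C (γ 0) * X 0) * (X 1 - C (γ 1) * X 0) * (X 1 - C (γ 2) * X 0) :
      MvPolynomial (Fin 2) ℂ).coeff m ∈ K := by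
    intro m
    have hPoly : ((X 1 - C (γ 0) * X 0) * (X 1 - C (γ 1) * X 0) * (X 1 - C (γ 2) * X 0) :
        MvPolynomial (Fin 2) ℂ)
        = monomial (Finsupp.single 1 3) 1
          - C (γ 0 + γ 1 + γ 2) * monomial (Finsupp.single 0 1 + Finsupp.single 1 2) 1
          + C (γ 0 * γ 1 + γ 0 * γ 2 + γ 1 * γ 2)
              * monomial (Finsupp.single 0 2 + Finsupp.single 1 1) 1
          - C (γ 0 * γ 1 * γ 2) * monomial (Finsupp.single 0 3) 1 := by
      have e1 : (monomial (Finsupp.single 1 3) (1:ℂ) : MvPolynomial (Fin 2) ℂ)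
          = X 1 ^ 3 := by rw [X_pow_eq_monomial]
      have e2 : (monomial (Finsupp.single 0 1 + Finsupp.single 1 2) (1:ℂ) :
          MvPolynomial (Fin 2) ℂ) = X 0 ^ 1 * X 1 ^ 2 := by
        rw [X_pow_eq_monomial, X_pow_eq_monomial, monomial_mul, one_mul]
      have e3 : (monomial (Finsupp.single 0 2 + Finsupp.single 1 1) (1:ℂ) :
          MvPolynomial (Fin 2) ℂ) = X 0 ^ 2 * X 1 ^ 1 := by
        rw [X_pow_eq_monomial, X_pow_eq_monomial, monomial_mul, one_mul]
      have e4 : (monomial (Finsupp.single 0 3) (1:ℂ) : MvPolynomial (Fin 2) ℂ)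
          = X 0 ^ 3 := by rw [X_pow_eq_monomial]
      rw [e1, e2, e3, e4]
      simp only [map_add, map_mul]
      ring
    rw [hPoly]
    simp only [coeff_sub, coeff_add, coeff_C_mul]
    exact sub_mem (add_mem (sub_mem (hmono _ _) (mul_mem he1K (hmono _ _)))
      (mul_mem he2K (hmono _ _))) (mul_mem he3K (hmono _ _))
  refine ⟨hcubic, huK, hmost, ?_, ?_, ?_⟩
  -- Case 1
  · rintro _ ⟨s, hsK, hs2⟩ i
    have hKL : K ≤ adj K {γ i} := fun x hx => Subfield.subset_closure (Or.inl hx)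
    exact rank3 _ hKL (hγall _ hKL s hs2 (hKL hsK) i (Subfield.subset_closure (Or.inr rfl)))
  -- Case 2
  · rintro _ _ i s hs2
    have hKL : K ≤ adj K {γ i, s} := fun x hx => Subfield.subset_closure (Or.inl hx)
    exact rank3 _ hKL (hγall _ hKL s hs2
      (Subfield.subset_closure (Or.inr (Set.mem_insert_of_mem _ rfl))) i
      (Subfield.subset_closure (Or.inr (Set.mem_insert _ _))))
  -- Case 3
  · rintro ⟨i, hiK, huniq⟩ s hs2
    have hsuK : s ^ 2 ∈ K := by rw [hs2]; exact huK
    constructor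
    · have hKL : K ≤ adj K {s} := fun x hx => Subfield.subset_closure (Or.inl hx)
      exact rank3 _ hKL (hγall _ hKL s hs2 (Subfield.subset_closure (Or.inr rfl)) i (hKL hiK))
    · fin_cases i
      · obtain ⟨hmiK, cpg, cpμ⟩ := case3_core K s (μ 0) (μ 1) (μ 2) (γ 0) (γ 1) (γ 2)
          hiK (hdist 0 1 (by decide)) (hdist 0 2 (by decide)) (hdist 1 2 (by decide))
          he1K he2K hc0' hc1' (hc 2 (by omega)) hsuK (by rw [hs2, hu]; ring)
        refine ⟨0, 1, 2, by decide, by decide, by decide, ?_, ?_⟩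
        · intro m; rw [hterm 0]; exact coeff_term_mem K (μ 0) (γ 0) d hmiK hiK m
        · intro m; rw [hterm 1, hterm 2]
          exact coeff_term_cp K s hsuK (μ 1) (μ 2) (γ 1) (γ 2) d cpμ cpg m
      · obtain ⟨hmiK, cpg, cpμ⟩ := case3_core K s (μ 1) (μ 0) (μ 2) (γ 1) (γ 0) (γ 2)
          hiK (hdist 1 0 (by decide)) (hdist 1 2 (by decide)) (hdist 0 2 (by decide))
          (by rw [show γ 1 + γ 0 + γ 2 = γ 0 + γ 1 + γ 2 from by ring]; exact he1K)
          (by rw [show γ 1 * γ 0 + γ 1 * γ 2 + γ 0 * γ 2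
              = γ 0 * γ 1 + γ 0 * γ 2 + γ 1 * γ 2 from by ring]; exact he2K)
          (by rw [show μ 1 + μ 0 + μ 2 = μ 0 + μ 1 + μ 2 from by ring]; exact hc0')
          (by rw [show μ 1 * γ 1 + μ 0 * γ 0 + μ 2 * γ 2
              = μ 0 * γ 0 + μ 1 * γ 1 + μ 2 * γ 2 from by ring]; exact hc1')
          (by rw [show μ 1 * γ 1 ^ 2 + μ 0 * γ 0 ^ 2 + μ 2 * γ 2 ^ 2
              = μ 0 * γ 0 ^ 2 + μ 1 * γ 1 ^ 2 + μ 2 * γ 2 ^ 2 from by ring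
            ]; exact hc 2 (by omega))
          hsuK (by rw [hs2, hu]; ring)
        refine ⟨1, 0, 2, by decide, by decide, by decide, ?_, ?_⟩
        · intro m; rw [hterm 1]; exact coeff_term_mem K (μ 1) (γ 1) d hmiK hiK m
        · intro m; rw [hterm 0, hterm 2]
          exact coeff_term_cp K s hsuK (μ 0) (μ 2) (γ 0) (γ 2) d cpμ cpg m
      · obtain ⟨hmiK, cpg, cpμ⟩ := case3_core K s (μ 2) (μ 0) (μ 1) (γ 2) (γ 0) (γ 1)
          hiK (hdist 2 0 (by decide)) (hdist 2 1 (by decide)) (hdist 0 1 (by decide))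
          (by rw [show γ 2 + γ 0 + γ 1 = γ 0 + γ 1 + γ 2 from by ring]; exact he1K)
          (by rw [show γ 2 * γ 0 + γ 2 * γ 1 + γ 0 * γ 1
              = γ 0 * γ 1 + γ 0 * γ 2 + γ 1 * γ 2 from by ring]; exact he2K)
          (by rw [show μ 2 + μ 0 + μ 1 = μ 0 + μ 1 + μ 2 from by ring]; exact hc0')
          (by rw [show μ 2 * γ 2 + μ 0 * γ 0 + μ 1 * γ 1
              = μ 0 * γ 0 + μ 1 * γ 1 + μ 2 * γ 2 from by ring]; exact hc1')
          (by rw [show μ 2 * γ 2 ^ 2 + μ 0 * γ 0 ^ 2 + μ 1 * γ 1 ^ 2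
              = μ 0 * γ 0 ^ 2 + μ 1 * γ 1 ^ 2 + μ 2 * γ 2 ^ 2 from by ring
            ]; exact hc 2 (by omega))
          hsuK (by rw [hs2, hu]; ring)
        refine ⟨2, 0, 1, by decide, by decide, by decide, ?_, ?_⟩
        · intro m; rw [hterm 2]; exact coeff_term_mem K (μ 2) (γ 2) d hmiK hiK m
        · intro m; rw [hterm 0, hterm 1]
          exact coeff_term_cp K s hsuK (μ 0) (μ 1) (γ 0) (γ 1) d cpμ cpg m
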